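/- If a non-increasing positive integer sequence l_1 is graphic and a non-increasing positive integer sequence l_2 of the same length and the same sum is majorized by l_1, then l_2 is also graphic. -/

import Mathlib

/-- A function `d : Fin n → ℕ` is graphic if it is the degree sequence of a
simple undirected graph on `n` vertices. -/
def Graphic (n : ℕ) (d : Fin n → ℕ) : Prop :=
  ∃ G : SimpleGraph (Fin n), ∀ v, (G.neighborSet v).ncard = d v

/-- Zero-free degree sequences of length `n` (non-increasing, positive, graphic). -/
def D (n : ℕ) : Set (Fin n → ℕ) :=
  {d | Antitone d ∧ (∀ i, 0 < d i) ∧ Graphic n d}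

/-- Degree sequences of length `n` allowing zero terms. -/
def D0 (n : ℕ) : Set (Fin n → ℕ) :=
  {d | Antitone d ∧ Graphic n d}
lemma graphic_transfer {n : ℕ} {d : Fin n → ℕ} (hg : Graphic n d) {u v : Fin n}
    (huv : u ≠ v) (h : d v + 2 ≤ d u) :
    Graphic n (fun x => if x = u then d u - 1 else if x = v then d v + 1 else d x) := by
  classical
  obtain ⟨G, hG⟩ := hg
  have hfin : ∀ s : Set (Fin n), s.Finite := fun s => s.toFinite
  have hex : ∃ w, G.Adj u w ∧ w ≠ v ∧ ¬ G.Adj v w := by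
    by_contra hc
    push_neg at hc
    have hsub : G.neighborSet u \ {v} ⊆ G.neighborSet v := by
      rintro w ⟨hw, hwv⟩
      exact (SimpleGraph.mem_neighborSet G v w).mpr (hc w hw (by simpa using hwv))
    have h1 : (G.neighborSet u \ {v}).ncard ≤ (G.neighborSet v).ncard :=
      Set.ncard_le_ncard hsub (hfin _)
    have h2 : (G.neighborSet u).ncard ≤ (G.neighborSet u \ {v}).ncard + 1 := by
      have hsub2 : G.neighborSet u ⊆ (G.neighborSet u \ {v}) ∪ {v} := by
        intro a ha
        by_cases hav : a = v
        · exact Or.inr (by simp [hav])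
        · exact Or.inl ⟨ha, by simp [hav]⟩
      calc (G.neighborSet u).ncard ≤ ((G.neighborSet u \ {v}) ∪ {v}).ncard :=
            Set.ncard_le_ncard hsub2 (hfin _)
        _ ≤ (G.neighborSet u \ {v}).ncard + ({v} : Set (Fin n)).ncard :=
            Set.ncard_union_le _ _
        _ = (G.neighborSet u \ {v}).ncard + 1 := by rw [Set.ncard_singleton]
    rw [hG u] at h2; rw [hG v] at h1
    omega
  obtain ⟨w, hadj, hwv, hnadj⟩ := hex
  have hwu : w ≠ u := fun e => G.loopless.irrefl u (e ▸ hadj)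
  set G' : SimpleGraph (Fin n) :=
    { Adj := fun a b => (G.Adj a b ∧ ¬((a = u ∧ b = w) ∨ (a = w ∧ b = u))) ∨
        ((a = v ∧ b = w) ∨ (a = w ∧ b = v))
      symm := by
        constructor
        rintro a b (⟨h1, h2⟩ | hp)
        · exact Or.inl ⟨h1.symm, by tauto⟩
        · exact Or.inr (by tauto)
      loopless := by
        constructor
        rintro a (⟨hab, _⟩ | (⟨h1, h2⟩ | ⟨h1, h2⟩))
        · exact G.loopless.irrefl a hab
        · exact hwv (h2.symm.trans h1)
        · exact hwv (h1.symm.trans h2) } with hG'def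
  have hadjG' : ∀ a b, G'.Adj a b ↔ ((G.Adj a b ∧ ¬((a = u ∧ b = w) ∨ (a = w ∧ b = u))) ∨
      ((a = v ∧ b = w) ∨ (a = w ∧ b = v))) := fun a b => Iff.rfl
  have hNu : G'.neighborSet u = G.neighborSet u \ {w} := by
    ext b
    simp only [SimpleGraph.mem_neighborSet, hadjG', Set.mem_diff, Set.mem_singleton_iff]
    constructor
    · intro hh; rcases hh with ⟨hb, hn⟩ | (⟨h1, h2⟩ | ⟨h1, h2⟩) <;> first | tauto | (exact absurd h1.symm huv) | (exact absurd h1.symm hwu)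
    · intro hh; tauto
  have hNv : G'.neighborSet v = insert w (G.neighborSet v) := by
    ext b
    simp only [SimpleGraph.mem_neighborSet, hadjG', Set.mem_insert_iff]
    constructor
    · intro hh; rcases hh with ⟨hb, _⟩ | (⟨_, h2⟩ | ⟨h1, _⟩) <;> first | tauto | (exact absurd h1.symm hwv)
    · intro hh
      rcases hh with rfl | hb
      · tauto
      · refine Or.inl ⟨hb, ?_⟩
        rintro (⟨e, _⟩ | ⟨e, _⟩)
        · exact huv e.symm
        · exact hwv e.symm
  have hNw : G'.neighborSet w = insert v (G.neighborSet w \ {u}) := by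
    ext b
    simp only [SimpleGraph.mem_neighborSet, hadjG', Set.mem_insert_iff,
      Set.mem_diff, Set.mem_singleton_iff]
    constructor
    · intro hh; rcases hh with ⟨hb, hn⟩ | (⟨h1, h2⟩ | ⟨_, h2⟩) <;> first | tauto | (exact absurd h1 hwv)
    · intro hh
      rcases hh with rfl | ⟨hb, hbu⟩
      · tauto
      · refine Or.inl ⟨hb, ?_⟩
        rintro (⟨e, _⟩ | ⟨_, e⟩)
        · exact hwu e
        · exact hbu e
  have hNx : ∀ x, x ≠ u → x ≠ v → x ≠ w → G'.neighborSet x = G.neighborSet x := by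
    intro x hxu hxv hxw
    ext b
    simp only [SimpleGraph.mem_neighborSet, hadjG']
    constructor
    · intro hh; rcases hh with ⟨hb, _⟩ | (⟨h1, _⟩ | ⟨h1, _⟩) <;> tauto
    · intro hb
      refine Or.inl ⟨hb, ?_⟩
      rintro (⟨e, _⟩ | ⟨e, _⟩) <;> tauto
  refine ⟨G', fun x => ?_⟩
  show (G'.neighborSet x).ncard = if x = u then d u - 1 else if x = v then d v + 1 else d x
  by_cases hxu : x = u
  · subst hxu
    rw [hNu, Set.ncard_diff_singleton_of_mem (show w ∈ G.neighborSet x from hadj),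
      hG, if_pos rfl]
  · by_cases hxv : x = v
    · subst hxv
      rw [hNv, Set.ncard_insert_of_notMem (show w ∉ G.neighborSet x from hnadj) (hfin _),
        hG, if_neg hxu, if_pos rfl]
    · by_cases hxw : x = w
      · subst hxw
        rw [hNw, Set.ncard_insert_of_notMem
            (by rintro ⟨hb, -⟩; exact hnadj ((SimpleGraph.mem_neighborSet G x v).mp hb).symm)
            (hfin _),
          Set.ncard_diff_singleton_of_mem (show u ∈ G.neighborSet x from hadj.symm),
          hG, if_neg hxu, if_neg hxv]
        have hu1 : 1 ≤ (G.neighborSet x).ncard := (Set.ncard_pos (hfin _)).mpr ⟨u, hadj.symm⟩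
        rw [hG] at hu1
        omega
      · rw [hNx x hxu hxv hxw, hG, if_neg hxu, if_neg hxv]

def Q {n : ℕ} (l : Fin n → ℕ) (m : ℕ) : ℤ :=
  ∑ t ∈ Finset.univ.filter (fun t : Fin n => (t : ℕ) < m), (l t : ℤ)

lemma Q_sub {n : ℕ} (l1 l2 : Fin n → ℕ) (m : ℕ) :
    Q l1 m - Q l2 m = ∑ t ∈ Finset.univ.filter (fun t : Fin n => (t : ℕ) < m),
      ((l1 t : ℤ) - (l2 t : ℤ)) := by
  rw [Q, Q, ← Finset.sum_sub_distrib]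

-- prefix-sum formula for the transfer
lemma Q_transfer {n : ℕ} (l1 : Fin n → ℕ) {i j : Fin n} (hij : i ≠ j) (hpos : 1 ≤ l1 i)
    (m : ℕ) :
    Q (fun x => if x = i then l1 i - 1 else if x = j then l1 j + 1 else l1 x) m =
      Q l1 m + (if (j : ℕ) < m then 1 else 0) - (if (i : ℕ) < m then 1 else 0) := by
  classical
  have hpt : ∀ t : Fin n,
      (((fun x => if x = i then l1 i - 1 else if x = j then l1 j + 1 else l1 x) t : ℕ) : ℤ)
        = (l1 t : ℤ) + ((if t = j then 1 else 0) - (if t = i then 1 else 0)) := by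
    intro t
    by_cases hti : t = i
    · subst hti
      simp only [if_pos rfl, if_neg hij]
      push_cast [hpos]
      ring
    · by_cases htj : t = j <;> simp [hti, htj, hij.symm]
  rw [Q, Q]
  simp only [hpt]
  rw [Finset.sum_add_distrib, Finset.sum_sub_distrib,
    Finset.sum_ite_eq' _ j (fun _ => (1 : ℤ)), Finset.sum_ite_eq' _ i (fun _ => (1 : ℤ))]
  simp only [Finset.mem_filter, Finset.mem_univ, true_and]
  ring

lemma step_lemma {n : ℕ} (l2 : Fin n → ℕ) (h2 : Antitone l2) (l1 : Fin n → ℕ)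
    (hQ : ∀ m : ℕ, Q l2 m ≤ Q l1 m) (hsum : Q l1 n = Q l2 n) (hg : Graphic n l1)
    (hne : l1 ≠ l2) :
    ∃ l1' : Fin n → ℕ, Graphic n l1' ∧ (∀ m : ℕ, Q l2 m ≤ Q l1' m) ∧ Q l1' n = Q l2 n ∧
      (∑ m ∈ Finset.range (n + 1), (Q l1' m - Q l2 m)) <
      (∑ m ∈ Finset.range (n + 1), (Q l1 m - Q l2 m)) := by
  classical
  have huniv : Finset.univ.filter (fun t : Fin n => (t : ℕ) < n) = Finset.univ := by
    apply Finset.filter_true_of_mem; intro t _; exact t.is_lt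
  -- first index where they differ
  set T := Finset.univ.filter (fun t : Fin n => l1 t ≠ l2 t) with hT
  have hTne : T.Nonempty := by
    obtain ⟨t, ht⟩ := Function.ne_iff.mp hne
    exact ⟨t, by simp [hT, ht]⟩
  set i := T.min' hTne with hi
  have hiT : i ∈ T := T.min'_mem hTne
  have hinei : l1 i ≠ l2 i := by simpa [hT] using hiT
  have hi_min : ∀ t : Fin n, (t : ℕ) < (i : ℕ) → l1 t = l2 t := by
    intro t ht
    by_contra hc
    have : i ≤ t := T.min'_le t (by simp [hT, hc])
    rw [Fin.le_def] at this
    omega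
  -- l2 i < l1 i
  have hdiffi : Q l1 ((i : ℕ) + 1) - Q l2 ((i : ℕ) + 1) = (l1 i : ℤ) - (l2 i : ℤ) := by
    rw [Q_sub]
    apply Finset.sum_eq_single_of_mem i (by simp)
    intro t ht hti
    simp only [Finset.mem_filter] at ht
    have : (t : ℕ) < (i : ℕ) := by
      rcases Nat.lt_succ_iff_lt_or_eq.mp ht.2 with h | h
      · exact h
      · exact absurd (Fin.ext h) hti
    rw [hi_min t this]; ring
  have hlt_i : l2 i < l1 i := by
    have := hQ ((i : ℕ) + 1)
    omega
  -- first deficit index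
  set U := Finset.univ.filter (fun t : Fin n => l1 t < l2 t) with hU
  have hUne : U.Nonempty := by
    by_contra hc
    rw [Finset.not_nonempty_iff_eq_empty] at hc
    have hle : ∀ t : Fin n, l2 t ≤ l1 t := by
      intro t
      by_contra hc2
      have : t ∈ U := by simp [hU]; omega
      simp [hc] at this
    have hlt : ∑ t : Fin n, (l2 t : ℤ) < ∑ t : Fin n, (l1 t : ℤ) := by
      apply Finset.sum_lt_sum (fun t _ => by exact_mod_cast hle t)
      exact ⟨i, Finset.mem_univ i, by exact_mod_cast hlt_i⟩
    rw [Q, Q, huniv] at hsum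
    omega
  set j := U.min' hUne with hj
  have hjU : j ∈ U := U.min'_mem hUne
  have hj1 : l1 j < l2 j := by simpa [hU] using hjU
  have hij : i ≠ j := by intro e; rw [e] at hlt_i; omega
  have hiltj : (i : ℕ) < (j : ℕ) := by
    have : i ≤ j := T.min'_le j (by simp [hT]; omega)
    rw [Fin.le_def] at this
    rcases this.lt_or_eq with h | h
    · exact h
    · exact absurd (Fin.ext h) hij
  have hj_min : ∀ t : Fin n, (t : ℕ) < (j : ℕ) → l2 t ≤ l1 t := by
    intro t ht
    by_contra hc
    have : j ≤ t := U.min'_le t (by simp [hU]; omega)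
    rw [Fin.le_def] at this
    omega
  have h2cond : l1 j + 2 ≤ l1 i := by
    have : l2 j ≤ l2 i := h2 (by rw [Fin.le_def]; omega)
    omega
  have hpos : 1 ≤ l1 i := by omega
  set l1' : Fin n → ℕ := fun x => if x = i then l1 i - 1 else if x = j then l1 j + 1 else l1 x
    with hl1'
  have hg' : Graphic n l1' := graphic_transfer hg hij h2cond
  have hQt : ∀ m : ℕ, Q l1' m =
      Q l1 m + (if (j : ℕ) < m then 1 else 0) - (if (i : ℕ) < m then 1 else 0) :=
    Q_transfer l1 hij hpos
  -- strictness in the middle range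
  have hstrict : ∀ m : ℕ, (i : ℕ) < m → m ≤ (j : ℕ) → Q l2 m + 1 ≤ Q l1 m := by
    intro m him hmj
    have hkey : (1 : ℤ) ≤ Q l1 m - Q l2 m := by
      rw [Q_sub]
      have h1 : ∑ t ∈ Finset.univ.filter (fun t : Fin n => (t : ℕ) < m),
          (if t = i then (1 : ℤ) else 0) = 1 := by
        rw [Finset.sum_ite_eq' _ i (fun _ => (1 : ℤ))]
        simp [him]
      rw [← h1]
      apply Finset.sum_le_sum
      intro t ht
      simp only [Finset.mem_filter] at ht
      by_cases hti : t = i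
      · subst hti; simp; omega
      · have : l2 t ≤ l1 t := hj_min t (lt_of_lt_of_le ht.2 hmj)
        simp [hti]; omega
    omega
  refine ⟨l1', hg', ?_, ?_, ?_⟩
  · intro m
    rw [hQt m]
    by_cases him : (i : ℕ) < m
    · by_cases hjm : (j : ℕ) < m
      · simp only [if_pos him, if_pos hjm]
        have := hQ m; omega
      · simp only [if_pos him, if_neg hjm]
        have := hstrict m him (by omega); omega
    · have hjm : ¬ (j : ℕ) < m := by omega
      simp only [if_neg him, if_neg hjm]
      have := hQ m; omega
  · rw [hQt n, if_pos i.is_lt, if_pos j.is_lt]; omega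
  · apply Finset.sum_lt_sum
    · intro m _
      rw [hQt m]
      by_cases him : (i : ℕ) < m <;> by_cases hjm : (j : ℕ) < m <;>
        simp only [if_pos, if_neg, him, hjm, if_true, if_false] <;> omega
    · refine ⟨(i : ℕ) + 1, Finset.mem_range.mpr (by have := i.is_lt; omega), ?_⟩
      rw [hQt ((i : ℕ) + 1), if_pos (by omega : (i : ℕ) < (i : ℕ) + 1),
        if_neg (by omega : ¬ (j : ℕ) < (i : ℕ) + 1)]
      omega


lemma main_aux {n : ℕ} (l2 : Fin n → ℕ) (h2 : Antitone l2) :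
    ∀ N : ℕ, ∀ l1 : Fin n → ℕ,
      (∀ m : ℕ, Q l2 m ≤ Q l1 m) → Q l1 n = Q l2 n →
      (∑ m ∈ Finset.range (n + 1), (Q l1 m - Q l2 m)) ≤ N →
      Graphic n l1 → Graphic n l2 := by
  classical
  intro N
  induction N with
  | zero =>
    intro l1 hQ hsum hD hg
    by_cases heq : l1 = l2
    · rwa [heq] at hg
    · obtain ⟨l1', _, hQ', _, hlt⟩ := step_lemma l2 h2 l1 hQ hsum hg heq
      have hnn : (0 : ℤ) ≤ ∑ m ∈ Finset.range (n + 1), (Q l1' m - Q l2 m) :=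
        Finset.sum_nonneg (fun m _ => by have := hQ' m; omega)
      omega
  | succ N ih =>
    intro l1 hQ hsum hD hg
    by_cases heq : l1 = l2
    · rwa [heq] at hg
    · obtain ⟨l1', hg', hQ', hsum', hlt⟩ := step_lemma l2 h2 l1 hQ hsum hg heq
      exact ih l1' hQ' hsum' (by omega) hg'

theorem graphic_of_majorized (n : ℕ) (l1 l2 : Fin n → ℕ)
    (h1 : Antitone l1) (h2 : Antitone l2)
    (hp1 : ∀ i, 0 < l1 i) (hp2 : ∀ i, 0 < l2 i)
    (hsum : ∑ i, l1 i = ∑ i, l2 i)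
    (hmaj : ∀ j : ℕ, ∑ i ∈ Finset.univ.filter (fun i : Fin n => (i : ℕ) < j), l2 i ≤
        ∑ i ∈ Finset.univ.filter (fun i : Fin n => (i : ℕ) < j), l1 i)
    (hg : Graphic n l1) : Graphic n l2 := by
  classical
  have hQ : ∀ m : ℕ, Q l2 m ≤ Q l1 m := by
    intro m
    have := hmaj m
    rw [Q, Q]
    push_cast
    exact_mod_cast this
  have huniv : Finset.univ.filter (fun t : Fin n => (t : ℕ) < n) = Finset.univ := by
    apply Finset.filter_true_of_mem; intro t _; exact t.is_lt
  have hsum' : Q l1 n = Q l2 n := by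
    rw [Q, Q, huniv]
    exact_mod_cast hsum
  exact main_aux l2 h2 (∑ m ∈ Finset.range (n + 1), (Q l1 m - Q l2 m)).toNat l1 hQ hsum'
    (by rw [Int.toNat_of_nonneg (Finset.sum_nonneg (fun m _ => by have := hQ m; omega))]) hg
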